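/- For all RC_Λ-formulas φ, ψ: (1) if S(ψ) ≠ ∅ and φ ⊢_{RC_Λ} ψ, then max S(φ) ≥ max S(ψ) (in particular S(φ) ≠ ∅); (2) if S(φ) = ∅ and φ ⊢_{RC_Λ} ψ, then S(ψ) = ∅. -/

import Mathlib

open Ordinal

/-- The binary Veblen function: `veblen 0 β = ω ^ β` and, for `α > 0`, `veblen α`
enumerates the common fixed points of the functions `veblen ξ` for `ξ < α`. -/
noncomputable def veblen (α : Ordinal.{0}) : Ordinal.{0} → Ordinal.{0} :=
  if α = 0 then fun β => omega0 ^ β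
  else derivFamily.{0, 0} (familyOfBFamily α fun ξ h => veblen ξ)
termination_by α
decreasing_by exact h

/-- The Feferman–Schütte ordinal `Γ₀`: the least nonzero ordinal closed under the
binary Veblen function. -/
noncomputable def Gamma0 : Ordinal.{0} :=
  sInf {L | 0 < L ∧ ∀ α < L, ∀ β < L, _root_.veblen α β < L}

/-- Strictly positive modal formulas with modalities indexed by ordinals. -/
inductive RCF : Type 1 where
  | top : RCF
  | var : ℕ → RCF
  | and : RCF → RCF → RCF
  | dia : Ordinal.{0} → RCF → RCF

/-- `φ.bounded Λ` holds iff all modalities occurring in `φ` are `< Λ`,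
i.e. iff `φ` is an `RC_Λ`-formula. -/
def RCF.bounded (Λ : Ordinal) : RCF → Prop
  | .top => True
  | .var _ => True
  | .and φ ψ => φ.bounded Λ ∧ ψ.bounded Λ
  | .dia α φ => α < Λ ∧ φ.bounded Λ

/-- Worms: formulas built from `⊤` by prefixing modalities. -/
def RCF.isWorm : RCF → Prop
  | .top => True
  | .var _ => False
  | .and _ _ => False
  | .dia _ φ => φ.isWorm

/-- The signature of a formula: the set of ordinals occurring in its modalities. -/
def RCF.sig : RCF → Set Ordinal
  | .top => ∅
  | .var _ => ∅
  | .and φ ψ => φ.sig ∪ ψ.sig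
  | .dia α φ => insert α φ.sig

/-- Derivability in the reflection calculus `RC_Λ`. -/
inductive RCder (Λ : Ordinal) : RCF → RCF → Prop where
  | id : ∀ φ, φ.bounded Λ → RCder Λ φ φ
  | topI : ∀ φ, φ.bounded Λ → RCder Λ φ .top
  | andE₁ : ∀ φ ψ, φ.bounded Λ → ψ.bounded Λ → RCder Λ (.and φ ψ) φ
  | andE₂ : ∀ φ ψ, φ.bounded Λ → ψ.bounded Λ → RCder Λ (.and φ ψ) ψ
  | diaTrans : ∀ α φ, α < Λ → φ.bounded Λ → RCder Λ (.dia α (.dia α φ)) (.dia α φ)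
  | diaDown : ∀ α β φ, β < α → α < Λ → φ.bounded Λ → RCder Λ (.dia α φ) (.dia β φ)
  | diaConj : ∀ α β φ ψ, β < α → α < Λ → φ.bounded Λ → ψ.bounded Λ →
      RCder Λ (.and (.dia α φ) (.dia β ψ)) (.dia α (.and φ (.dia β ψ)))
  | andI : ∀ {φ ψ χ}, RCder Λ φ ψ → RCder Λ φ χ → RCder Λ φ (.and ψ χ)
  | cut : ∀ {φ ψ χ}, RCder Λ φ ψ → RCder Λ ψ χ → RCder Λ φ χ
  | diaMono : ∀ {φ ψ} (α), α < Λ → RCder Λ φ ψ → RCder Λ (.dia α φ) (.dia α ψ)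

/-- Membership in `W_{Γ₀}`: worms of `RC_{Γ₀}`. -/
def isGWorm (A : RCF) : Prop := A.isWorm ∧ A.bounded Gamma0

/-- `WormLT B A` is the consistency ordering `B <₀ A` on worms of `W_{Γ₀}`:
`A ⊢_{RC_{Γ₀}} ⟨0⟩B`. -/
def WormLT (B A : RCF) : Prop :=
  isGWorm A ∧ isGWorm B ∧ RCder Gamma0 A (.dia 0 B)

/- The order type `o A` of a worm, defined recursively by
`o A = sup_{B <₀ A} (o B + 1)` (well-defined since `<₀` is well-founded). -/
open Classical in
noncomputable def wormO (A : RCF) : Ordinal.{0} :=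
  if h : WellFounded WormLT then
    h.fix (C := fun _ => Ordinal.{0})
      (fun B ih => ⨆ C : {C : RCF // WormLT C B}, (ih C.1 C.2 + 1)) A
  else 0

lemma RCF.sig_finite : ∀ φ : RCF, (RCF.sig φ).Finite
  | .top => Set.finite_empty
  | .var _ => Set.finite_empty
  | .and φ ψ => (sig_finite φ).union (sig_finite ψ)
  | .dia _ φ => (sig_finite φ).insert _

lemma sig_pointwise {Λ : Ordinal} {φ ψ : RCF} (h : RCder Λ φ ψ) :
    ∀ x ∈ RCF.sig ψ, ∃ y ∈ RCF.sig φ, x ≤ y := by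
  induction h with
  | id φ _ => exact fun x hx => ⟨x, hx, le_rfl⟩
  | topI φ _ => exact fun x hx => hx.elim
  | andE₁ φ ψ _ _ => exact fun x hx => ⟨x, Or.inl hx, le_rfl⟩
  | andE₂ φ ψ _ _ => exact fun x hx => ⟨x, Or.inr hx, le_rfl⟩
  | diaTrans α φ _ _ =>
      intro x hx
      exact ⟨x, Or.inr hx, le_rfl⟩
  | diaDown α β φ hβα _ _ =>
      intro x hx
      rcases hx with rfl | hx
      · exact ⟨α, Or.inl rfl, hβα.le⟩
      · exact ⟨x, Or.inr hx, le_rfl⟩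
  | diaConj α β φ ψ _ _ _ _ =>
      intro x hx
      rcases hx with rfl | hx | hx
      · exact ⟨x, Or.inl (Or.inl rfl), le_rfl⟩
      · exact ⟨x, Or.inl (Or.inr hx), le_rfl⟩
      · exact ⟨x, Or.inr hx, le_rfl⟩
  | andI _ _ ih₁ ih₂ =>
      intro x hx
      rcases hx with hx | hx
      · exact ih₁ x hx
      · exact ih₂ x hx
  | cut _ _ ih₁ ih₂ =>
      intro x hx
      obtain ⟨y, hy, hxy⟩ := ih₂ x hx
      obtain ⟨z, hz, hyz⟩ := ih₁ y hy
      exact ⟨z, hz, hxy.trans hyz⟩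
  | diaMono α _ _ ih =>
      intro x hx
      rcases hx with rfl | hx
      · exact ⟨x, Or.inl rfl, le_rfl⟩
      · obtain ⟨y, hy, hxy⟩ := ih x hx
        exact ⟨y, Or.inr hy, hxy⟩

/-- (1) If `S(ψ) ≠ ∅` and `φ ⊢_{RC_Λ} ψ`, then `max S(φ) ≥ max S(ψ)` (in
particular `S(φ) ≠ ∅`); (2) if `S(φ) = ∅` and `φ ⊢_{RC_Λ} ψ`, then
`S(ψ) = ∅`. -/
theorem sig_of_der (Λ : Ordinal) (φ ψ : RCF) :
    ((RCF.sig ψ).Nonempty → RCder Λ φ ψ →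
      (RCF.sig φ).Nonempty ∧ sSup (RCF.sig ψ) ≤ sSup (RCF.sig φ)) ∧
    (RCF.sig φ = ∅ → RCder Λ φ ψ → RCF.sig ψ = ∅) := by
  constructor
  · intro hψ hder
    obtain ⟨x, hx⟩ := id hψ
    obtain ⟨y, hy, _⟩ := sig_pointwise hder x hx
    refine ⟨⟨y, hy⟩, ?_⟩
    refine csSup_le hψ fun z hz => ?_
    obtain ⟨w, hw, hzw⟩ := sig_pointwise hder z hz
    exact hzw.trans (le_csSup (φ.sig_finite.bddAbove) hw)
  · intro hφ hder
    rw [Set.eq_empty_iff_forall_notMem]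
    intro x hx
    obtain ⟨y, hy, _⟩ := sig_pointwise hder x hx
    rw [hφ] at hy
    exact hy
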